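/- Let G be a graph on n vertices with n > k such that every k-subset of vertices is a (1, ≤2)-identifying set. Then n + ((n−k+2)/(n−1))·(n−k+3) ≤ 2k − 3. -/

import Mathlib

open Set

variable {V : Type*}

/-- The closed neighbourhood `N[x]` of a vertex. -/
def closedNbhd (G : SimpleGraph V) (x : V) : Set V :=
  insert x (G.neighborSet x)

/-- `C` is an identifying set: all sets `N[x] ∩ C` are nonempty and pairwise distinct. -/
def IsIdentifying (G : SimpleGraph V) (C : Set V) : Prop :=
  (∀ x : V, (closedNbhd G x ∩ C).Nonempty) ∧
    ∀ x y : V, closedNbhd G x ∩ C = closedNbhd G y ∩ C → x = y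

/-- Every `k`-subset of vertices is an identifying set. -/
def EveryKIdentifying (G : SimpleGraph V) (k : ℕ) : Prop :=
  ∀ C : Set V, C.ncard = k → IsIdentifying G C

/-- `N[X] = ⋃ x ∈ X, N[x]`. -/
def nbhdSet (G : SimpleGraph V) (X : Set V) : Set V :=
  ⋃ x ∈ X, closedNbhd G x

/-- `C` is `(1, ≤ ℓ)`-identifying. -/
def IsLIdentifying (G : SimpleGraph V) (ℓ : ℕ) (C : Set V) : Prop :=
  ∀ X Y : Set V, X.ncard ≤ ℓ → Y.ncard ≤ ℓ → X ≠ Y →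
    nbhdSet G X ∩ C ≠ nbhdSet G Y ∩ C

/-- Every `k`-subset of vertices is a `(1, ≤ ℓ)`-identifying set. -/
def EveryKLIdentifying (G : SimpleGraph V) (k ℓ : ℕ) : Prop :=
  ∀ C : Set V, C.ncard = k → IsLIdentifying G ℓ C

/-- Membership in closed neighbourhoods is symmetric. -/
lemma aux_closedNbhd_comm (G : SimpleGraph V) (u w : V) :
    w ∈ closedNbhd G u ↔ u ∈ closedNbhd G w := by
  simp only [closedNbhd, Set.mem_insert_iff, SimpleGraph.mem_neighborSet]
  rw [G.adj_comm, eq_comm]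

/-- Key separation lemma: if every `k`-subset is `(1,≤2)`-identifying, then for any two
distinct vertices `u, v`, the set `N[u] \ N[v]` has at least `n - k + 1` elements. -/
lemma aux_key [Fintype V] (G : SimpleGraph V) (n k : ℕ)
    (hn : Fintype.card V = n) (hkn : k ≤ n)
    (h : EveryKLIdentifying G k 2) {u v : V} (huv : u ≠ v) :
    n - k + 1 ≤ ((closedNbhd G u \ closedNbhd G v).toFinite.toFinset).card := by
  classical
  by_contra hlt
  push_neg at hlt
  set T := (closedNbhd G u \ closedNbhd G v).toFinite.toFinset with hT
  have hTcard : T.card ≤ n - k := by omega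
  have hcompl : k ≤ Tᶜ.card := by
    have h1 := Finset.card_compl T
    have h2 : T.card ≤ Fintype.card V := Finset.card_le_univ T
    omega
  obtain ⟨C', hC'sub, hC'card⟩ := Finset.exists_subset_card_eq hcompl
  have hC : (↑C' : Set V).ncard = k := by simp [Set.ncard_coe_finset, hC'card]
  have hid := h (↑C') hC
  have hXY : ({v} : Set V) ≠ {u, v} := by
    intro he
    have hu : u ∈ ({u, v} : Set V) := by simp
    rw [← he] at hu
    exact huv (by simpa using hu)
  have h1 : ({v} : Set V).ncard ≤ 2 := by simp
  have h2 : ({u, v} : Set V).ncard ≤ 2 := by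
    calc ({u, v} : Set V).ncard ≤ ({v} : Set V).ncard + 1 := Set.ncard_insert_le _ _
    _ ≤ 2 := by simp
  have heq : nbhdSet G {v} ∩ ↑C' = nbhdSet G {u, v} ∩ ↑C' := by
    have hv : nbhdSet G {v} = closedNbhd G v := by simp [nbhdSet]
    have huvs : nbhdSet G {u, v} = closedNbhd G u ∪ closedNbhd G v := by
      simp [nbhdSet]
    rw [hv, huvs]
    ext w
    simp only [Set.mem_inter_iff, Set.mem_union]
    constructor
    · rintro ⟨hw, hc⟩; exact ⟨Or.inr hw, hc⟩
    · rintro ⟨hw, hc⟩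
      refine ⟨?_, hc⟩
      rcases hw with hw | hw
      · by_contra hnv
        have hwT : w ∈ T := by
          rw [hT, Set.Finite.mem_toFinset]
          exact ⟨hw, hnv⟩
        have hwc : w ∈ Tᶜ := hC'sub hc
        simp only [Finset.mem_compl] at hwc
        exact hwc hwT
      · exact hw
  exact hid {v} {u, v} h1 h2 hXY heq

/-- Plotkin-type counting bound: if all pairwise differences of closed neighbourhoods
have at least `d` elements, then `4 * ((n-1) * d) * n ≤ n ^ 3`. -/
lemma aux_count [Fintype V] (G : SimpleGraph V) (n d : ℕ)
    (hn : Fintype.card V = n)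
    (hd : ∀ u v : V, u ≠ v →
      d ≤ ((closedNbhd G u \ closedNbhd G v).toFinite.toFinset).card) :
    4 * ((n - 1) * d) * n ≤ n ^ 3 := by
  classical
  set Nf : V → Finset V := fun x => (closedNbhd G x).toFinite.toFinset with hNf
  have hdiff : ∀ u v : V, (closedNbhd G u \ closedNbhd G v).toFinite.toFinset
      = Nf u \ Nf v := by
    intro u v; ext w
    simp only [hNf, Set.Finite.mem_toFinset, Finset.mem_sdiff]
    exact Iff.rfl
  have hsymm : ∀ u w : V, w ∈ Nf u ↔ u ∈ Nf w := by
    intro u w; simp only [hNf, Set.Finite.mem_toFinset]; exact aux_closedNbhd_comm G u w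
  set S : ℕ := ∑ u : V, ∑ v : V, (Nf u \ Nf v).card with hS
  have hlow : n * ((n - 1) * d) ≤ S := by
    rw [hS]
    calc n * ((n - 1) * d) = ∑ _u : V, (n - 1) * d := by
          rw [Finset.sum_const, Finset.card_univ, hn, smul_eq_mul]
    _ ≤ ∑ u : V, ∑ v : V, (Nf u \ Nf v).card := by
        apply Finset.sum_le_sum
        intro u _
        calc (n - 1) * d = ∑ _v ∈ Finset.univ.erase u, d := by
              rw [Finset.sum_const, smul_eq_mul,
                Finset.card_erase_of_mem (Finset.mem_univ u), Finset.card_univ, hn]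
        _ ≤ ∑ v ∈ Finset.univ.erase u, (Nf u \ Nf v).card := by
            apply Finset.sum_le_sum
            intro v hv
            rw [← hdiff]
            exact hd u v (Finset.ne_of_mem_erase hv).symm
        _ ≤ ∑ v : V, (Nf u \ Nf v).card :=
            Finset.sum_le_sum_of_subset (Finset.erase_subset _ _)
  have hrepr : ∀ u v : V, (Nf u \ Nf v).card
      = ∑ w : V, (if w ∈ Nf u then 1 else 0) * (if w ∉ Nf v then 1 else 0) := by
    intro u v
    rw [show Nf u \ Nf v = Finset.univ.filter (fun w => w ∈ Nf u ∧ w ∉ Nf v) by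
      ext w; simp [Finset.mem_sdiff]]
    rw [Finset.card_filter]
    apply Finset.sum_congr rfl
    intro w _
    by_cases h1 : w ∈ Nf u <;> by_cases h2 : w ∈ Nf v <;> simp [h1, h2]
  have hSw : S = ∑ w : V, (Nf w).card * (n - (Nf w).card) := by
    rw [hS]
    simp_rw [hrepr]
    rw [show (∑ u : V, ∑ v : V, ∑ w : V,
        (if w ∈ Nf u then (1:ℕ) else 0) * (if w ∉ Nf v then 1 else 0))
        = ∑ w : V, ∑ u : V, ∑ v : V,
        (if w ∈ Nf u then (1:ℕ) else 0) * (if w ∉ Nf v then 1 else 0) from by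
      rw [show (∑ u : V, ∑ v : V, ∑ w : V,
          (if w ∈ Nf u then (1:ℕ) else 0) * (if w ∉ Nf v then 1 else 0))
          = ∑ u : V, ∑ w : V, ∑ v : V,
          (if w ∈ Nf u then (1:ℕ) else 0) * (if w ∉ Nf v then 1 else 0) from
        Finset.sum_congr rfl fun u _ => Finset.sum_comm]
      exact Finset.sum_comm]
    apply Finset.sum_congr rfl
    intro w _
    rw [← Finset.sum_mul_sum]
    congr 1
    · rw [← Finset.card_filter]
      congr 1
      rw [show Finset.univ.filter (fun u => w ∈ Nf u) = Nf w by
        ext u; simp [hsymm]]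
    · rw [← Finset.card_filter]
      have hadd := Finset.card_filter_add_card_filter_not
        (s := (Finset.univ : Finset V)) (p := fun v => w ∈ Nf v)
      have hc : (Finset.univ.filter (fun v => w ∈ Nf v)).card = (Nf w).card := by
        congr 1
        rw [show Finset.univ.filter (fun v => w ∈ Nf v) = Nf w by
          ext u; simp [hsymm]]
      rw [Finset.card_univ, hn] at hadd
      omega
  have hup : 4 * S ≤ n * n ^ 2 := by
    rw [hSw, Finset.mul_sum]
    calc ∑ w : V, 4 * ((Nf w).card * (n - (Nf w).card)) ≤ ∑ _w : V, n ^ 2 := by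
          apply Finset.sum_le_sum
          intro w _
          have hcle : (Nf w).card ≤ n := by rw [← hn]; exact Finset.card_le_univ _
          zify [hcle]
          nlinarith [sq_nonneg ((n : ℤ) - 2 * (Nf w).card)]
    _ = n * n ^ 2 := by rw [Finset.sum_const, Finset.card_univ, hn, smul_eq_mul]
  calc 4 * ((n - 1) * d) * n = 4 * (n * ((n - 1) * d)) := by ring
  _ ≤ 4 * S := by omega
  _ ≤ n * n ^ 2 := hup
  _ = n ^ 3 := by ring

theorem stmt18 [Fintype V] (G : SimpleGraph V) (n k : ℕ)
    (hn : Fintype.card V = n) (hn2 : 2 ≤ n) (hnk : k < n)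
    (h : EveryKLIdentifying G k 2) :
    (n : ℚ) + (((n : ℚ) - k + 2) / ((n : ℚ) - 1)) * ((n : ℚ) - k + 3) ≤
      2 * (k : ℚ) - 3 := by
  classical
  set d : ℕ := n - k + 1 with hdd
  have hd2 : 2 ≤ d := by omega
  have hcount : 4 * ((n - 1) * d) * n ≤ n ^ 3 :=
    aux_count G n d hn (fun u v huv => aux_key G n k hn hnk.le h huv)
  have hnpos : 0 < n := by omega
  have hmainN : 4 * ((n - 1) * d) ≤ n ^ 2 := by
    have : 4 * ((n - 1) * d) * n ≤ n ^ 2 * n := by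
      calc 4 * ((n - 1) * d) * n ≤ n ^ 3 := hcount
      _ = n ^ 2 * n := by ring
    exact Nat.le_of_mul_le_mul_right this hnpos
  -- pass to integers
  have hdz : (d : ℤ) = (n : ℤ) - k + 1 := by
    rw [hdd]
    push_cast [Nat.cast_sub hnk.le]
    ring
  have hmainZ : 4 * (((n : ℤ) - 1) * (d : ℤ)) ≤ (n : ℤ) ^ 2 := by
    have h' := hmainN
    zify [show 1 ≤ n by omega, hnk.le] at h'
    rw [hdz] at h' ⊢
    linarith
  have hdZ : (2 : ℤ) ≤ (d : ℤ) := by exact_mod_cast hd2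
  have hnZ : (2 : ℤ) ≤ (n : ℤ) := by exact_mod_cast hn2
  have htargetZ : ((d : ℤ) + 1) * ((d : ℤ) + 2) ≤ ((n : ℤ) - 1) * ((n : ℤ) - 2 * d - 1) := by
    have hstep : 4 * (d : ℤ) - 1 ≤ (n : ℤ) := by
      by_contra hc
      push_neg at hc
      nlinarith [mul_nonneg (show (0:ℤ) ≤ (n : ℤ) - 2 by linarith)
        (show (0:ℤ) ≤ 4 * (d : ℤ) - 2 - n by linarith)]
    nlinarith [mul_nonneg (show (0:ℤ) ≤ (n : ℤ) - (4 * d - 1) by linarith)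
        (show (0:ℤ) ≤ (n : ℤ) + 2 * d - 3 by linarith), sq_nonneg ((d : ℤ) - 2)]
  have htargetQ : ((d : ℚ) + 1) * ((d : ℚ) + 2)
      ≤ ((n : ℚ) - 1) * ((n : ℚ) - 2 * d - 1) := by exact_mod_cast htargetZ
  have hkq : (d : ℚ) = (n : ℚ) - k + 1 := by
    rw [hdd]
    push_cast [Nat.cast_sub hnk.le]
    ring
  have hn1 : (0 : ℚ) < (n : ℚ) - 1 := by
    have : (2 : ℚ) ≤ (n : ℚ) := by exact_mod_cast hn2
    linarith
  have final : ((n : ℚ) - k + 2) / ((n : ℚ) - 1) * ((n : ℚ) - k + 3)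
      ≤ 2 * (k : ℚ) - 3 - n := by
    rw [div_mul_eq_mul_div, div_le_iff₀ hn1]
    have hk2 : (k : ℚ) = (n : ℚ) - d + 1 := by linarith
    rw [hk2]
    linear_combination htargetQ
  linarith [final]
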